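/- Let S be a countable ℵ₀-categorical semigroup and let {(A_i, X_i) : i ∈ I} be a system of t-pivoted pairwise relatively characteristic subsets of S. Then the set of cardinalities {|A_i| : i ∈ I} is finite. If, moreover, each A_i is a subsemigroup of S, then {A_i : i ∈ I} contains only finitely many semigroups up to isomorphism, and each A_i is an ℵ₀-categorical semigroup. -/
import Mathlib


/-- Two `n`-tuples of a semigroup are automorphically equivalent if some semigroup
automorphism maps one to the other componentwise. -/
def AutRel (S : Type*) [Semigroup S] {n : ℕ} (a b : Fin n → S) : Prop :=
  ∃ φ : S ≃* S, ∀ k, φ (a k) = b k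

/-- A semigroup is ℵ₀-categorical if, for every `n ≥ 1`, the action of its automorphism
group on `n`-tuples has only finitely many orbits. -/
def Aleph0Categorical (S : Type*) [Semigroup S] : Prop :=
  ∀ n : ℕ, 1 ≤ n → ∃ t : Set (Fin n → S), t.Finite ∧
    ∀ a : Fin n → S, ∃ b ∈ t, AutRel S b a

/-- `{(A i, X i) : i ∈ I}` is a system of `t`-pivoted pairwise relatively characteristic
subsets of `S`: whenever an automorphism maps the pivot `X i` componentwise to `X j`,
its restriction to `A i` is a bijection onto `A j`. -/
def IsPRCSystem (S : Type*) [Semigroup S] {I : Type*} {t : ℕ}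
    (A : I → Set S) (X : I → Fin t → S) : Prop :=
  ∀ (φ : S ≃* S) (i j : I), (∀ k, φ (X i k) = X j k) → Set.BijOn φ (A i) (A j)

/-- Representatives exist for every tuple length, including `0`. -/
lemma exists_reps (S : Type*) [Semigroup S] (hcat : Aleph0Categorical S) (m : ℕ) :
    ∃ T : Set (Fin m → S), T.Finite ∧ ∀ a : Fin m → S, ∃ b ∈ T, AutRel S b a := by
  rcases Nat.eq_zero_or_pos m with rfl | hm
  · exact ⟨Set.univ, Set.finite_univ, fun a => ⟨a, trivial, MulEquiv.refl S, fun k => rfl⟩⟩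
  · exact hcat m hm

/-- A bijection between subsemigroup carriers induced by an automorphism is a `MulEquiv`. -/
lemma exists_mulEquiv_of_bijOn {S : Type*} [Semigroup S] (B C : Subsemigroup S) (φ : S ≃* S)
    (h : Set.BijOn φ (B : Set S) (C : Set S)) :
    ∃ e : B ≃* C, ∀ x : B, (e x : S) = φ x := by
  refine ⟨{ toEquiv := h.equiv φ, map_mul' := fun x y => ?_ }, fun x => rfl⟩
  apply Subtype.ext
  show φ (((x : S)) * (y : S)) = φ (x : S) * φ (y : S)
  exact map_mul φ _ _

theorem aleph0Categorical_prc_system (S : Type*) [Semigroup S] [Countable S]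
    (hcat : Aleph0Categorical S) {I : Type*} {t : ℕ}
    (A : I → Set S) (X : I → Fin t → S) (hprc : IsPRCSystem S A X) :
    (Set.range fun i => Cardinal.mk (A i)).Finite ∧
    ∀ B : I → Subsemigroup S, (∀ i, (B i : Set S) = A i) →
      (∃ F : Set I, F.Finite ∧ ∀ i : I, ∃ j ∈ F, Nonempty ((B i) ≃* (B j))) ∧
      ∀ i : I, Aleph0Categorical (B i) := by
  classical
  obtain ⟨T, hTfin, hT⟩ := exists_reps S hcat t
  -- the finite set of representative indices
  set F : Set I := ⋃ c ∈ T, if h : ∃ j, AutRel S c (X j) then {h.choose} else ∅ with hF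
  have hFfin : F.Finite := hTfin.biUnion fun c _ => by
    split <;> simp
  have key : ∀ i : I, ∃ j ∈ F, ∃ φ : S ≃* S, ∀ k, φ (X j k) = X i k := by
    intro i
    obtain ⟨b, hbT, φ, hφ⟩ := hT (X i)
    have hex : ∃ j, AutRel S b (X j) := ⟨i, φ, hφ⟩
    refine ⟨hex.choose, ?_, ?_⟩
    · simp only [hF, Set.mem_iUnion]
      exact ⟨b, hbT, by rw [dif_pos hex]; simp⟩
    · obtain ⟨ψ, hψ⟩ := hex.choose_spec
      refine ⟨ψ.symm.trans φ, fun k => ?_⟩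
      simp [← hψ k, hφ k]
  constructor
  · -- finitely many cardinalities
    have : (Set.range fun i => Cardinal.mk (A i)) ⊆ (fun j => Cardinal.mk (A j)) '' F := by
      rintro _ ⟨i, rfl⟩
      obtain ⟨j, hjF, φ, hφ⟩ := key i
      exact ⟨j, hjF, Cardinal.mk_congr ((hprc φ j i hφ).equiv φ)⟩
    exact ((hFfin.image _).subset this)
  · intro B hB
    constructor
    · -- finitely many isomorphism classes
      refine ⟨F, hFfin, fun i => ?_⟩
      obtain ⟨j, hjF, φ, hφ⟩ := key i
      have hb : Set.BijOn φ (B j : Set S) (B i : Set S) := by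
        rw [hB i, hB j]; exact hprc φ j i hφ
      obtain ⟨e, -⟩ := exists_mulEquiv_of_bijOn (B j) (B i) φ hb
      exact ⟨j, hjF, ⟨e.symm⟩⟩
    · -- each is ℵ₀-categorical
      intro i n hn
      obtain ⟨T', hT'fin, hT'⟩ := exists_reps S hcat (t + n)
      set J : (Fin n → (B i)) → (Fin (t + n) → S) :=
        fun a => Fin.append (X i) (fun k => (a k : S)) with hJ
      set D : Set (Fin n → (B i)) :=
        ⋃ c ∈ T', if h : ∃ a, AutRel S c (J a) then {h.choose} else ∅ with hD
      have hDfin : D.Finite := hT'fin.biUnion fun c _ => by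
        split <;> simp
      refine ⟨D, hDfin, fun a => ?_⟩
      obtain ⟨c, hcT', φ, hφ⟩ := hT' (J a)
      have hex : ∃ b, AutRel S c (J b) := ⟨a, φ, hφ⟩
      refine ⟨hex.choose, ?_, ?_⟩
      · simp only [hD, Set.mem_iUnion]
        exact ⟨c, hcT', by rw [dif_pos hex]; simp⟩
      · obtain ⟨ψ, hψ⟩ := hex.choose_spec
        set b := hex.choose
        set χ : S ≃* S := ψ.symm.trans φ with hχ
        have hχJ : ∀ k, χ (J b k) = J a k := by
          intro k
          simp [hχ, ← hψ k, hφ k]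
        have hχX : ∀ k, χ (X i k) = X i k := by
          intro k
          have h1 := hχJ (Fin.castAdd n k)
          simpa [hJ, Fin.append_left] using h1
        have hχb : ∀ k : Fin n, χ ((b k : S)) = (a k : S) := by
          intro k
          have h1 := hχJ (Fin.natAdd t k)
          simpa [hJ, Fin.append_right] using h1
        have hbij : Set.BijOn χ (B i : Set S) (B i : Set S) := by
          rw [hB i]; exact hprc χ i i hχX
        obtain ⟨e, he⟩ := exists_mulEquiv_of_bijOn (B i) (B i) χ hbij
        exact ⟨e, fun k => Subtype.ext (by rw [he (b k), hχb k])⟩
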